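/- No strategy in the two-product, two-rating, one-observation game has worst-case expected regret (over all column-stochastic states) strictly less than 1/8. -/

import Mathlib

/-- A state of Nature: a column-stochastic `2 × 2` matrix, `S r d` being the probability that
product `d` receives rating `r + 1` (ratings are `1` and `2`). -/
def IsState (S : Fin 2 → Fin 2 → ℝ) : Prop :=
  (∀ r d, 0 ≤ S r d) ∧ (∀ d, S 0 d + S 1 d = 1)

/-- The value of product `d` in state `S`: the expected rating `∑_r (r+1) · S r d`. -/
def value (S : Fin 2 → Fin 2 → ℝ) (d : Fin 2) : ℝ :=
  ∑ r : Fin 2, ((r : ℕ) + 1 : ℝ) * S r d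

/-- Expected regret of a (randomized) strategy `σ` against state `S`.  An observation is a
function `ω : Fin 2 → Fin 2` giving the observed rating of each product; it occurs with
probability `S (ω 0) 0 * S (ω 1) 1`, and `σ ω` is the probability of selecting product `0`. -/
def regret (σ : (Fin 2 → Fin 2) → ℝ) (S : Fin 2 → Fin 2 → ℝ) : ℝ :=
  max (value S 0) (value S 1) -
    ∑ ω : Fin 2 → Fin 2,
      S (ω 0) 0 * S (ω 1) 1 * (σ ω * value S 0 + (1 - σ ω) * value S 1)

private lemma sum4 (f : (Fin 2 → Fin 2) → ℝ) :
    ∑ ω, f ω = f ![0,0] + f ![0,1] + f ![1,0] + f ![1,1] := by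
  rw [← (piFinTwoEquiv fun _ => Fin 2).symm.sum_comp, Fintype.sum_prod_type,
    Fin.sum_univ_two, Fin.sum_univ_two, Fin.sum_univ_two]
  have h : (finZeroElim : Fin 0 → Fin 2) = ![] := Subsingleton.elim _ _
  simp [piFinTwoEquiv, h]
  ring

/-- No strategy in the two-product, two-rating, one-observation game has worst-case expected
regret strictly below `1/8`: for every strategy there is a state with regret at least `1/8`. -/
theorem no_strategy_beats_one_eighth
    (σ : (Fin 2 → Fin 2) → ℝ) (hσ : ∀ ω, σ ω ∈ Set.Icc (0:ℝ) 1) :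
    ∃ S : Fin 2 → Fin 2 → ℝ, IsState S ∧ 1 / 8 ≤ regret σ S := by
  set A : Fin 2 → Fin 2 → ℝ := fun r d => if r = d then (1/4 : ℝ) else 3/4 with hAdef
  set B : Fin 2 → Fin 2 → ℝ := fun r d => if r = d then (3/4 : ℝ) else 1/4 with hBdef
  have hA : IsState A := by
    constructor
    · intro r d; simp only [hAdef]; split <;> norm_num
    · intro d; fin_cases d <;> simp [hAdef] <;> norm_num
  have hB : IsState B := by
    constructor
    · intro r d; simp only [hBdef]; split <;> norm_num
    · intro d; fin_cases d <;> simp [hBdef] <;> norm_num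
  have h00 := hσ ![0,0]
  have h01 := hσ ![0,1]
  have h10 := hσ ![1,0]
  have h11 := hσ ![1,1]
  simp only [Set.mem_Icc] at h00 h01 h10 h11
  have hvA0 : value A 0 = 7/4 := by simp [value, Fin.sum_univ_two, hAdef]; norm_num
  have hvA1 : value A 1 = 5/4 := by simp [value, Fin.sum_univ_two, hAdef]; norm_num
  have hvB0 : value B 0 = 5/4 := by simp [value, Fin.sum_univ_two, hBdef]; norm_num
  have hvB1 : value B 1 = 7/4 := by simp [value, Fin.sum_univ_two, hBdef]; norm_num
  have hrA : regret σ A =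
      7/4 - (3/16 * (σ ![0,0] * (7/4) + (1 - σ ![0,0]) * (5/4))
        + 1/16 * (σ ![0,1] * (7/4) + (1 - σ ![0,1]) * (5/4))
        + 9/16 * (σ ![1,0] * (7/4) + (1 - σ ![1,0]) * (5/4))
        + 3/16 * (σ ![1,1] * (7/4) + (1 - σ ![1,1]) * (5/4))) := by
    rw [regret, sum4, hvA0, hvA1]
    simp [hAdef]
    norm_num
  have hrB : regret σ B =
      7/4 - (3/16 * (σ ![0,0] * (5/4) + (1 - σ ![0,0]) * (7/4))
        + 9/16 * (σ ![0,1] * (5/4) + (1 - σ ![0,1]) * (7/4))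
        + 1/16 * (σ ![1,0] * (5/4) + (1 - σ ![1,0]) * (7/4))
        + 3/16 * (σ ![1,1] * (5/4) + (1 - σ ![1,1]) * (7/4))) := by
    rw [regret, sum4, hvB0, hvB1]
    simp [hBdef]
    norm_num
  have hsum : (1:ℝ)/4 ≤ regret σ A + regret σ B := by
    rw [hrA, hrB]; nlinarith [h00.1, h00.2, h01.1, h01.2, h10.1, h10.2, h11.1, h11.2]
  by_cases h : (1:ℝ)/8 ≤ regret σ A
  · exact ⟨A, hA, h⟩
  · exact ⟨B, hB, by push_neg at h; linarith⟩
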